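/- Kostka polynomials of type B_n with one column diagrams: for integers 0 ≤ l ≤ r ≤ n, define K(n,r,l) := (−1)^l (t^{n−r+1};t)_l · ∑_{k=0}^{⌊l/2⌋} (−t^{n−r};t)_{2k} t^k / ((t²;t²)_k (t^{2n−2r+2};t²)_k) + (−1)^{l−1} (t^{n−r+2};t)_{l−1} · ∑_{k=0}^{⌊(l−1)/2⌋} (−t^{n−r+1};t)_{2k} t^k / ((t²;t²)_k (t^{2n−2r+4};t²)_k) (for l = 0 the second sum is empty), as an element of the rational function field ℚ(t); here the factor (−t^{n−r};t)_{2k} is the cancelled form of the ratio (t^{2n−2r};t²)_{2k}/(t^{n−r};t)_{2k}, and similarly for (−t^{n−r+1};t)_{2k}. Then K(n,r,l) = t^L · [n−r+2L choose L]_{t²} if l = 2L, and K(n,r,l) = t^{L+n−r+1} · [n−r+2L+1 choose L]_{t²} if l = 2L+1. In particular K(n,r,l) is a polynomial in t with nonnegative integer coefficients. -/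
import Mathlib


/-!
The Kostka polynomials of type `B_n` attached to one column diagrams:
closed formula in terms of Gaussian binomial coefficients, and nonnegativity
of the coefficients.  Everything takes place in the rational function field ℚ(t).
-/

open Finset

noncomputable section

/-- The rational function field ℚ(t). -/
abbrev F : Type := RatFunc ℚ

/-- The variable `t`. -/
def T : F := RatFunc.X

/-- The q-Pochhammer symbol (z;q)_k. -/
def qPoch (z q : F) (k : ℕ) : F := ∏ j ∈ Finset.range k, (1 - z * q ^ j)

/-- The Gaussian binomial coefficient `[m choose j]_q = ∏_{k=1}^j (1−q^{m−k+1})/(1−q^k)`. -/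
def qbinom (q : F) (m j : ℕ) : F :=
  ∏ k ∈ Finset.range j, ((1 - q ^ (m - k)) / (1 - q ^ (k+1)))

/-- The Kostka coefficient `K^{B_n}_{(1^r)(1^{r−l})}(t)` in its explicit
two-sum form (the second sum being empty for `l = 0`). -/
def KB (n r l : ℕ) : F :=
  (-1 : F)^l * qPoch (T^(n-r+1)) T l *
    (∑ k ∈ Finset.range (l/2 + 1),
      qPoch (-(T^(n-r))) T (2*k) * T^k /
        (qPoch (T^2) (T^2) k * qPoch (T^(2*(n-r)+2)) (T^2) k)) +
  (if l = 0 then 0 else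
    (-1 : F)^(l-1) * qPoch (T^(n-r+2)) T (l-1) *
      (∑ k ∈ Finset.range ((l-1)/2 + 1),
        qPoch (-(T^(n-r+1))) T (2*k) * T^k /
          (qPoch (T^2) (T^2) k * qPoch (T^(2*(n-r)+4)) (T^2) k)))

namespace KostkaAux

lemma one_sub_T_pow_ne_zero {m : ℕ} (hm : 1 ≤ m) : (1 - T^m : F) ≠ 0 := by
  have h : (1 - T^m : F) = algebraMap (Polynomial ℚ) F (1 - Polynomial.X^m) := by
    simp [T, map_sub, map_pow, map_one]
  rw [h]
  apply RatFunc.algebraMap_ne_zero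
  intro hc
  have := congrArg (fun p => Polynomial.coeff p m) hc
  simp only [Polynomial.coeff_sub, Polynomial.coeff_one, Polynomial.coeff_X_pow,
    if_neg (by omega : ¬ m = 0), if_pos rfl, Polynomial.coeff_zero] at this
  norm_num at this

/-- `(q²;q²)_j` as an explicit product. -/
def Dp (j : ℕ) : F := ∏ k ∈ Finset.range j, (1 - T^(2*k+2))
/-- numerator of the Gaussian binomial. -/
def Np (m j : ℕ) : F := ∏ k ∈ Finset.range j, (1 - T^(2*(m-k)))
/-- `(q^{2a+2};q²)_k`. -/
def Pe (a k : ℕ) : F := ∏ j ∈ Finset.range k, (1 - T^(2*a+2+2*j))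

lemma Dp_ne_zero (j : ℕ) : Dp j ≠ 0 :=
  Finset.prod_ne_zero_iff.mpr fun k _ => one_sub_T_pow_ne_zero (by omega)
lemma Pe_ne_zero (a k : ℕ) : Pe a k ≠ 0 :=
  Finset.prod_ne_zero_iff.mpr fun j _ => one_sub_T_pow_ne_zero (by omega)

lemma Dp_succ (j : ℕ) : Dp (j+1) = Dp j * (1 - T^(2*j+2)) := Finset.prod_range_succ _ _

lemma qPoch_sq (k : ℕ) : qPoch (T^2) (T^2) k = Dp k :=
  Finset.prod_congr rfl fun j _ => by rw [← pow_mul, ← pow_add, show 2+2*j = 2*j+2 by omega]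

lemma qPoch_pe (a k : ℕ) : qPoch (T^(2*a+2)) (T^2) k = Pe a k :=
  Finset.prod_congr rfl fun j _ => by rw [← pow_mul, ← pow_add]

lemma qbinom_eq (m j : ℕ) : qbinom (T^2) m j = Np m j / Dp j := by
  rw [qbinom, Finset.prod_div_distrib]
  congr 1
  · exact Finset.prod_congr rfl fun k _ => by rw [← pow_mul]
  · exact Finset.prod_congr rfl fun k _ => by rw [← pow_mul, show 2*(k+1) = 2*k+2 by ring]

lemma qPoch_pow (s m : ℕ) : qPoch (T^s) T m = ∏ j ∈ Finset.range m, (1 - T^(s+j)) :=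
  Finset.prod_congr rfl fun j _ => by rw [pow_add]

lemma qPoch_neg_pow (s m : ℕ) : qPoch (-(T^s)) T m = ∏ j ∈ Finset.range m, (1 + T^(s+j)) :=
  Finset.prod_congr rfl fun j _ => by rw [pow_add]; ring

lemma qPoch_ne_zero (s m : ℕ) (hs : 1 ≤ s) : qPoch (T^s) T m ≠ 0 := by
  rw [qPoch_pow]
  exact Finset.prod_ne_zero_iff.mpr fun j _ => one_sub_T_pow_ne_zero (by omega)

lemma Np_peel_first (m j : ℕ) : Np (m+1) (j+1) = (1 - T^(2*(m+1))) * Np m j := by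
  rw [Np, Np, Finset.prod_range_succ', Nat.sub_zero, mul_comm]
  congr 1
  exact Finset.prod_congr rfl fun k _ => by rw [show m+1-(k+1) = m-k by omega]

lemma Np_peel_last (m j : ℕ) : Np m (j+1) = Np m j * (1 - T^(2*(m-j))) :=
  Finset.prod_range_succ _ _

/-- the key product identity (A). -/
lemma prodA (a L : ℕ) :
    qPoch (T^(a+1)) T (2*L+2) * qPoch (-(T^a)) T (2*L+2)
      = (1 + T^a) * (1 - T^(a+2*L+2)) * (Pe a (L+1) * Np (a+2*L+1) L) := by
  rw [qPoch_pow, qPoch_neg_pow]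
  have h1 : ∏ j ∈ Finset.range (2*L+2), (1 - T^(a+1+j))
      = (∏ j ∈ Finset.range (2*L+1), (1 - T^(a+1+j))) * (1 - T^(a+2*L+2)) := by
    rw [show 2*L+2 = (2*L+1)+1 by omega, Finset.prod_range_succ,
      show a+1+(2*L+1) = a+2*L+2 by omega]
  have h2 : ∏ j ∈ Finset.range (2*L+2), (1 + T^(a+j))
      = (1 + T^a) * ∏ j ∈ Finset.range (2*L+1), (1 + T^(a+1+j)) := by
    rw [show 2*L+2 = (2*L+1)+1 by omega, Finset.prod_range_succ', Nat.add_zero, mul_comm]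
    congr 1
    exact Finset.prod_congr rfl fun j _ => by rw [show a+(j+1) = a+1+j by omega]
  have h3 : (∏ j ∈ Finset.range (2*L+1), (1 - T^(a+1+j)))
        * (∏ j ∈ Finset.range (2*L+1), (1 + T^(a+1+j)))
      = ∏ j ∈ Finset.range (2*L+1), (1 - T^(2*a+2+2*j)) := by
    rw [← Finset.prod_mul_distrib]
    exact Finset.prod_congr rfl fun j _ => by
      rw [show 2*a+2+2*j = (a+1+j)*2 by ring, pow_mul]; ring
  have h4 : ∏ j ∈ Finset.range (2*L+1), (1 - T^(2*a+2+2*j))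
      = Pe a (L+1) * Np (a+2*L+1) L := by
    rw [show 2*L+1 = (L+1)+L by omega, Finset.prod_range_add]
    congr 1
    rw [Np, ← Finset.prod_range_reflect]
    exact Finset.prod_congr rfl fun j hj => by
      rw [show 2*a+2+2*((L+1)+(L-1-j)) = 2*((a+2*L+1) - j) from by
        have := Finset.mem_range.mp hj; omega]
  calc (∏ j ∈ Finset.range (2*L+2), (1 - T^(a+1+j)))
        * (∏ j ∈ Finset.range (2*L+2), (1 + T^(a+j)))
      = (1 + T^a) * (1 - T^(a+2*L+2))
          * ((∏ j ∈ Finset.range (2*L+1), (1 - T^(a+1+j)))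
            * (∏ j ∈ Finset.range (2*L+1), (1 + T^(a+1+j)))) := by rw [h1, h2]; ring
    _ = _ := by rw [h3, h4]

/-- the summand. -/
def trm (a k : ℕ) : F :=
  qPoch (-(T^a)) T (2*k) * T^k / (qPoch (T^2) (T^2) k * qPoch (T^(2*a+2)) (T^2) k)

/-- one half of `KB`. -/
def u (a m : ℕ) : F :=
  (-1 : F)^m * qPoch (T^(a+1)) T m * ∑ k ∈ Finset.range (m/2 + 1), trm a k

lemma KB_eq (n r l : ℕ) :
    KB n r l = u (n-r) l + (if l = 0 then 0 else u (n-r+1) (l-1)) := by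
  have htrm : ∀ k : ℕ, qPoch (-(T^(n-r+1))) T (2*k) * T^k /
        (qPoch (T^2) (T^2) k * qPoch (T^(2*(n-r)+4)) (T^2) k) = trm (n-r+1) k := fun k => by
    rw [trm, show 2*(n-r+1)+2 = 2*(n-r)+4 by omega]
  have htrm0 : ∀ k : ℕ, qPoch (-(T^(n-r))) T (2*k) * T^k /
        (qPoch (T^2) (T^2) k * qPoch (T^(2*(n-r)+2)) (T^2) k) = trm (n-r) k := fun k => by
    rw [trm]
  rw [KB, u, u, show n-r+2 = n-r+1+1 by omega]
  simp only [htrm, htrm0]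

/-- the single cleared term `E a (L+1)`. -/
lemma trm_closed (a L : ℕ) :
    qPoch (T^(a+1)) T (2*L+2) * trm a (L+1)
      = (1 + T^a) * (1 - T^(a+2*L+2)) * Np (a+2*L+1) L * T^(L+1) / Dp (L+1) := by
  rw [trm, show 2*(L+1) = 2*L+2 by omega, show 2*a+2 = 2*a+2 from rfl, qPoch_sq, qPoch_pe, ← mul_div_assoc]
  rw [div_eq_div_iff (by exact mul_ne_zero (Dp_ne_zero _) (Pe_ne_zero _ _)) (Dp_ne_zero _)]
  linear_combination (T^(L+1) * Dp (L+1)) * prodA a L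

lemma I1 (a L : ℕ) :
    T^(L+1) * qbinom (T^2) (a+2*L+2) (L+1)
      = (T^(a+2*L+2) - 1) * (T^(L+a+1) * qbinom (T^2) (a+2*L+1) L)
        + qPoch (T^(a+1)) T (2*L+2) * trm a (L+1) := by
  rw [trm_closed, qbinom_eq, qbinom_eq,
    show a+2*L+2 = (a+2*L+1)+1 by omega, Np_peel_first, Dp_succ]
  rw [show (a+2*L+1)+1 = a+2*L+2 by omega]
  field_simp [Dp_ne_zero, one_sub_T_pow_ne_zero (show 1 ≤ 2*L+2 by omega)]
  ring

lemma I2 (a L : ℕ) :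
    T^(L+a+2) * qbinom (T^2) (a+2*L+3) (L+1)
      = (T^(a+2*L+3) - 1) * (T^(L+1) * qbinom (T^2) (a+2*L+2) (L+1))
        + qPoch (T^(a+2)) T (2*L+2) * trm (a+1) (L+1) := by
  have hA := trm_closed (a+1) L
  rw [show (a+1)+1 = a+2 by omega, show (a+1)+2*L+2 = a+2*L+3 by omega,
    show (a+1)+2*L+1 = a+2*L+2 by omega] at hA
  rw [hA, qbinom_eq, qbinom_eq]
  rw [show a+2*L+3 = (a+2*L+2)+1 by omega, Np_peel_first (a+2*L+2) L,
    show (a+2*L+2)+1 = a+2*L+3 by omega]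
  rw [show Np (a+2*L+2) (L+1) = Np (a+2*L+2) L * (1 - T^(2*(a+L+2))) from by
    rw [Np_peel_last, show a+2*L+2-L = a+L+2 by omega]]
  rw [Dp_succ]
  field_simp [Dp_ne_zero, one_sub_T_pow_ne_zero (show 1 ≤ 2*L+2 by omega)]
  ring

lemma u_zero (a : ℕ) : u a 0 = 1 := by
  simp [u, trm, qPoch]

lemma qPoch_succ (z q : F) (k : ℕ) : qPoch z q (k+1) = qPoch z q k * (1 - z * q^k) :=
  Finset.prod_range_succ _ _

lemma u_odd (a L : ℕ) : u a (2*L+1) = (T^(a+2*L+1) - 1) * u a (2*L) := by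
  rw [u, u, show (2*L+1)/2 = L by omega, show (2*L)/2 = L by omega, qPoch_succ,
    pow_succ, ← pow_add, show a+1+2*L = a+2*L+1 by omega]
  ring

lemma u_even (a L : ℕ) :
    u a (2*L+2) = (T^(a+2*L+2) - 1) * (T^(a+2*L+1) - 1) * u a (2*L)
      + qPoch (T^(a+1)) T (2*L+2) * trm a (L+1) := by
  rw [u, u, show (2*L+2)/2 = L+1 by omega, show (2*L)/2 = L by omega,
    Finset.sum_range_succ,
    show ((-1:F))^(2*L+2) = 1 from by rw [show 2*L+2 = 2*(L+1) by ring, pow_mul]; norm_num,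
    show ((-1:F))^(2*L) = 1 from by rw [pow_mul]; norm_num,
    show (2*L+2) = (2*L+1)+1 from by omega, qPoch_succ, qPoch_succ,
    ← pow_add, ← pow_add, show a+1+2*L = a+2*L+1 from by omega,
    show a+1+(2*L+1) = a+2*L+2 from by omega]
  ring

/-- the simultaneous induction. -/
lemma main (a : ℕ) : ∀ L : ℕ,
    (u a (2*L) + (if L = 0 then 0 else (T^(a+2*L) - 1) * u (a+1) (2*(L-1)))
        = T^L * qbinom (T^2) (a+2*L) L)
    ∧ ((T^(a+2*L+1) - 1) * u a (2*L) + u (a+1) (2*L)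
        = T^(L+a+1) * qbinom (T^2) (a+2*L+1) L) := by
  intro L
  induction L with
  | zero =>
    constructor
    · simp [u_zero, qbinom]
    · simp [u_zero, qbinom]
  | succ L ih =>
    obtain ⟨ih1, ih2⟩ := ih
    have he : u a (2*(L+1)) + (T^(a+2*(L+1)) - 1) * u (a+1) (2*L)
        = T^(L+1) * qbinom (T^2) (a+2*(L+1)) (L+1) := by
      rw [show 2*(L+1) = 2*L+2 by omega, show a+(2*L+2) = a+2*L+2 by omega, u_even]
      linear_combination (T^(a+2*L+2)-1) * ih2 - I1 a L
    constructor
    · rw [if_neg (by omega), show (L+1-1) = L by omega]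
      exact he
    · rw [show 2*(L+1) = 2*L+2 by omega, show a+(2*L+2)+1 = a+2*L+3 by omega,
        u_even, u_even,
        show (a+1)+2*L+2 = a+2*L+3 by omega, show (a+1)+2*L+1 = a+2*L+2 by omega,
        show (a+1)+1 = a+2 by omega]
      linear_combination (T^(a+2*L+3)-1)*(T^(a+2*L+2)-1) * ih2
        - (T^(a+2*L+3)-1) * I1 a L - I2 a L

lemma KB_even (n r L : ℕ) : KB n r (2*L) = T^L * qbinom (T^2) (n-r+2*L) L := by
  have h := (main (n-r) L).1
  rw [KB_eq]
  cases L with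
  | zero => simpa using h
  | succ L' =>
    rw [if_neg (by omega)] at h ⊢
    rw [show L'+1-1 = L' by omega] at h
    rw [show 2*(L'+1)-1 = 2*L'+1 by omega, u_odd,
      show (n-r+1)+2*L'+1 = (n-r)+2*(L'+1) by omega]
    exact h

lemma KB_odd (n r L : ℕ) : KB n r (2*L+1) = T^(L+(n-r)+1) * qbinom (T^2) (n-r+2*L+1) L := by
  have h := (main (n-r) L).2
  rw [KB_eq, if_neg (by omega), show 2*L+1-1 = 2*L by omega, u_odd]
  exact h

/-- Pascal-type recursion for Gaussian binomial numerators, over `ℕ`. -/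
def Gp : ℕ → ℕ → Polynomial ℕ
  | _, 0 => 1
  | 0, _+1 => 0
  | m+1, j+1 => Gp m j + Polynomial.X^(j+1) * Gp m (j+1)

lemma qbinom_eq_zero {m j : ℕ} (h : m < j) : qbinom (T^2) m j = 0 := by
  rw [qbinom]
  apply Finset.prod_eq_zero (Finset.mem_range.mpr h)
  rw [Nat.sub_self]
  simp

lemma pascal (m j : ℕ) : qbinom (T^2) (m+1) (j+1)
    = qbinom (T^2) m j + (T^2)^(j+1) * qbinom (T^2) m (j+1) := by
  by_cases hjm : j ≤ m
  · obtain ⟨d, rfl⟩ : ∃ d, m = j + d := ⟨m - j, by omega⟩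
    rw [qbinom_eq, qbinom_eq, qbinom_eq, Np_peel_first,
      show Np (j+d) (j+1) = Np (j+d) j * (1 - T^(2*d)) from by
        rw [Np_peel_last, show j+d-j = d by omega],
      Dp_succ]
    field_simp [Dp_ne_zero, one_sub_T_pow_ne_zero (show 1 ≤ 2*j+2 by omega)]
    ring
  · rw [qbinom_eq_zero (by omega : m+1 < j+1), qbinom_eq_zero (by omega : m < j),
      qbinom_eq_zero (by omega : m < j+1)]
    ring

lemma Gp_correct (m : ℕ) : ∀ j : ℕ,
    Polynomial.eval₂ (Nat.castRingHom F) (T^2) (Gp m j) = qbinom (T^2) m j := by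
  induction m with
  | zero =>
    intro j
    cases j with
    | zero => simp [Gp, qbinom]
    | succ j => rw [qbinom_eq_zero (by omega)]; simp [Gp]
  | succ m ih =>
    intro j
    cases j with
    | zero => simp [Gp, qbinom]
    | succ j =>
      rw [show Gp (m+1) (j+1) = Gp m j + Polynomial.X^(j+1) * Gp m (j+1) from rfl,
        Polynomial.eval₂_add, Polynomial.eval₂_mul, Polynomial.eval₂_pow,
        Polynomial.eval₂_X, ih, ih, pascal]

lemma bridge (g : Polynomial ℕ) :
    algebraMap (Polynomial ℚ) F (g.map (Nat.castRingHom ℚ))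
      = Polynomial.eval₂ (Nat.castRingHom F) T g := by
  induction g using Polynomial.induction_on' with
  | add p q hp hq => rw [Polynomial.map_add, map_add, Polynomial.eval₂_add, hp, hq]
  | monomial k c =>
    rw [Polynomial.map_monomial, Polynomial.eval₂_monomial,
      ← Polynomial.C_mul_X_pow_eq_monomial, map_mul, map_pow]
    rw [RatFunc.algebraMap_C, RatFunc.algebraMap_X]
    rw [show ((Nat.castRingHom ℚ) c) = (c : ℚ) from rfl, map_natCast RatFunc.C c]
    rfl

lemma image_pow_mul (s m j : ℕ) :
    algebraMap (Polynomial ℚ) F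
        ((Polynomial.X ^ s * (Gp m j).comp (Polynomial.X ^ 2)).map (Nat.castRingHom ℚ))
      = T^s * qbinom (T^2) m j := by
  rw [bridge, Polynomial.eval₂_mul, Polynomial.eval₂_pow, Polynomial.eval₂_X,
    Polynomial.eval₂_comp, Polynomial.eval₂_pow, Polynomial.eval₂_X, Gp_correct]

end KostkaAux

open KostkaAux

/-- Closed form for the type `B_n` one-column Kostka polynomials:
`K(n,r,2L) = t^L [n−r+2L choose L]_{t²}` and
`K(n,r,2L+1) = t^{L+n−r+1} [n−r+2L+1 choose L]_{t²}`; in particular each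
`K(n,r,l)` is a polynomial in `t` with nonnegative integer coefficients. -/
theorem kostka_Bn (n r l : ℕ) (hl : l ≤ r) (hr : r ≤ n) :
    (∀ L : ℕ, l = 2*L → KB n r l = T^L * qbinom (T^2) (n - r + 2*L) L) ∧
    (∀ L : ℕ, l = 2*L + 1 → KB n r l = T^(L + (n-r) + 1) * qbinom (T^2) (n - r + 2*L + 1) L) ∧
    (∃ p : Polynomial ℕ,
      KB n r l = algebraMap (Polynomial ℚ) F (p.map (Nat.castRingHom ℚ))) := by
  refine ⟨?_, ?_, ?_⟩
  · intro L hL; subst hL; exact KB_even n r L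
  · intro L hL; subst hL; exact KB_odd n r L
  · obtain ⟨L, hL | hL⟩ := Nat.even_or_odd' l
    · exact ⟨Polynomial.X ^ L * (Gp (n-r+2*L) L).comp (Polynomial.X ^ 2), by
        rw [show l = 2*L from hL, KB_even, image_pow_mul]⟩
    · exact ⟨Polynomial.X ^ (L+(n-r)+1) * (Gp (n-r+2*L+1) L).comp (Polynomial.X ^ 2), by
        rw [hL, KB_odd, image_pow_mul]⟩

end
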